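/- (1D free boundary problem, solutions.) With I(a,λ) as above: (i) if a < 2√(2/λ) the unique minimizer is u ≡ 1; (ii) if a > 2√(2/λ) the unique minimizer is the function u₂ given by u₂(x) = 1 − √(2λ)x for x ∈ [0, 1/√(2λ)], u₂(x) = 0 for x ∈ [1/√(2λ), a − 1/√(2λ)], and u₂(x) = √(2λ)x + 1 − √(2λ)a for x ∈ [a − 1/√(2λ), a]; (iii) if a = 2√(2/λ) exactly the two functions u ≡ 1 and u₂ are minimizers. -/

import Mathlib

open MeasureTheory

/-- Admissible class for the 1D free boundary problem: `u ∈ W^{1,2}(0,a)`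
(represented by its continuous representative, primitive of `g ∈ L²`),
with boundary values `u(0) = u(a) = 1`. -/
def Adm1D (a : ℝ) (u g : ℝ → ℝ) : Prop :=
  ContinuousOn u (Set.Icc 0 a) ∧
  MemLp g 2 (volume.restrict (Set.Ioo 0 a)) ∧
  (∀ x ∈ Set.Icc 0 a, u x = 1 + ∫ s in (0:ℝ)..x, g s) ∧
  u 0 = 1 ∧ u a = 1

/-- The cost `∫_0^a |u'|²/2 dt + λ |{u ≠ 0}|`. -/
noncomputable def cost1D (a l : ℝ) (u g : ℝ → ℝ) : ℝ :=
  (∫ s in Set.Ioo 0 a, g s ^ 2 / 2) +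
    l * (volume {s | s ∈ Set.Ioo 0 a ∧ u s ≠ 0}).toReal

/-- The value `I(a,λ)` of the 1D free boundary problem. -/
noncomputable def I1D (a l : ℝ) : ℝ :=
  sInf {c | ∃ u g, Adm1D a u g ∧ c = cost1D a l u g}

/-- The explicit nontrivial candidate minimizer `u₂`. -/
noncomputable def uTwo (a l : ℝ) (x : ℝ) : ℝ :=
  if x ≤ 1 / Real.sqrt (2 * l) then 1 - Real.sqrt (2 * l) * x
  else if x ≤ a - 1 / Real.sqrt (2 * l) then 0
  else Real.sqrt (2 * l) * x + 1 - Real.sqrt (2 * l) * a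

/-- A minimizer of the 1D problem. -/
def Min1D (a l : ℝ) (u g : ℝ → ℝ) : Prop :=
  Adm1D a u g ∧ cost1D a l u g = I1D a l

open Set

section Helpers

lemma fin_restrict {a : ℝ} : IsFiniteMeasure (volume.restrict (Ioo (0:ℝ) a)) :=
  ⟨by rw [Measure.restrict_apply_univ, Real.volume_Ioo]; exact ENNReal.ofReal_lt_top⟩

lemma integrable_g {a : ℝ} {g : ℝ → ℝ} (hg : MemLp g 2 (volume.restrict (Ioo 0 a))) :
    IntegrableOn g (Ioo 0 a) :=
  have := @fin_restrict a
  hg.integrable one_le_two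

lemma integrable_gsq {a : ℝ} {g : ℝ → ℝ} (hg : MemLp g 2 (volume.restrict (Ioo 0 a))) :
    IntegrableOn (fun x => g x ^ 2) (Ioo 0 a) :=
  hg.integrable_sq

lemma const_intOn {c d r : ℝ} : IntegrableOn (fun _ : ℝ => r) (Ioo c d) :=
  integrableOn_const (by rw [Real.volume_Ioo]; exact ENNReal.ofReal_ne_top)

lemma cs_bound {g : ℝ → ℝ} {c d v : ℝ} (hcd : c < d)
    (hg1 : IntegrableOn g (Ioo c d)) (hg2 : IntegrableOn (fun x => g x ^ 2) (Ioo c d))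
    (hv : ∫ x in Ioo c d, g x = v) :
    v ^ 2 / (2 * (d - c)) ≤ ∫ x in Ioo c d, g x ^ 2 / 2 ∧
    ((∫ x in Ioo c d, g x ^ 2 / 2) = v ^ 2 / (2 * (d - c)) →
      ∀ᵐ x ∂(volume.restrict (Ioo c d)), g x = v / (d - c)) := by
  have hne : d - c ≠ 0 := sub_ne_zero.2 hcd.ne'
  have hpos : (0:ℝ) < d - c := sub_pos.2 hcd
  set m := v / (d - c) with hm
  have hint : IntegrableOn (fun x => (g x - m) ^ 2) (Ioo c d) := by
    have : (fun x => (g x - m) ^ 2) = fun x => g x ^ 2 + ((-(2*m)) * g x + m ^ 2) := by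
      funext x; ring
    rw [this]
    exact hg2.add ((hg1.const_mul _).add const_intOn)
  have hmeas : volume (Ioo c d) = ENNReal.ofReal (d - c) := Real.volume_Ioo
  have h1 : IntegrableOn (fun x => g x ^ 2 - 2 * m * g x) (Ioo c d) :=
    hg2.sub (hg1.const_mul _)
  have key : ∫ x in Ioo c d, (g x - m) ^ 2
      = (∫ x in Ioo c d, g x ^ 2) - v ^ 2 / (d - c) := by
    have expand : ∫ x in Ioo c d, (g x - m) ^ 2
        = (∫ x in Ioo c d, g x ^ 2) - 2 * m * v + m ^ 2 * (d - c) := by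
      have e0 : ∫ x in Ioo c d, (g x - m) ^ 2
          = ∫ x in Ioo c d, (g x ^ 2 - 2 * m * g x + m ^ 2) :=
        setIntegral_congr_fun measurableSet_Ioo (fun x _ => by ring)
      have e1 : ∫ x in Ioo c d, (g x ^ 2 - 2 * m * g x + m ^ 2)
          = (∫ x in Ioo c d, (g x ^ 2 - 2 * m * g x)) + ∫ _x in Ioo c d, (m ^ 2 : ℝ) :=
        integral_add h1 const_intOn
      have e2 : ∫ x in Ioo c d, (g x ^ 2 - 2 * m * g x)
          = (∫ x in Ioo c d, g x ^ 2) - ∫ x in Ioo c d, 2 * m * g x :=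
        integral_sub hg2 (hg1.const_mul _)
      have e3 : ∫ x in Ioo c d, 2 * m * g x = 2 * m * v := by
        rw [integral_const_mul, hv]
      have e4 : ∫ _x in Ioo c d, (m ^ 2 : ℝ) = m ^ 2 * (d - c) := by
        rw [setIntegral_const, measureReal_def, hmeas, ENNReal.toReal_ofReal hpos.le]; simp [smul_eq_mul, mul_comm]
      rw [e0, e1, e2, e3, e4]
    rw [expand, hm]; field_simp; ring
  have hnn : 0 ≤ ∫ x in Ioo c d, (g x - m) ^ 2 :=
    setIntegral_nonneg measurableSet_Ioo (fun x _ => sq_nonneg _)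
  have half : (∫ x in Ioo c d, g x ^ 2 / 2) = (∫ x in Ioo c d, g x ^ 2) / 2 := by
    rw [integral_div]
  have hgev : v ^ 2 / (d - c) ≤ ∫ x in Ioo c d, g x ^ 2 := by
    rw [key] at hnn; linarith
  have hhalfid : v ^ 2 / (2 * (d - c)) = (v ^ 2 / (d - c)) / 2 := by rw [div_div, mul_comm]
  constructor
  · rw [half, hhalfid]; linarith
  · intro heq
    have hz : ∫ x in Ioo c d, (g x - m) ^ 2 = 0 := by
      rw [half, hhalfid] at heq
      rw [key]; linarith
    have := (integral_eq_zero_iff_of_nonneg (fun x => sq_nonneg (g x - m)) hint).1 hz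
    filter_upwards [this] with x hx
    have h2 : (g x - m) ^ 2 = 0 := hx
    have := pow_eq_zero_iff (n := 2) (by norm_num) |>.1 h2
    linarith [sub_eq_zero.1 this]

lemma intOn_sub {a c d : ℝ} {g : ℝ → ℝ} (h0 : 0 ≤ c) (hda : d ≤ a)
    (hg : IntegrableOn g (Ioo 0 a)) : IntegrableOn g (Ioo c d) :=
  hg.mono_set (fun x hx => ⟨lt_of_le_of_lt h0 hx.1, lt_of_lt_of_le hx.2 hda⟩)

lemma ivl_int {a c d : ℝ} {g : ℝ → ℝ} (h0 : 0 ≤ c) (hcd : c ≤ d) (hda : d ≤ a)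
    (hg : IntegrableOn g (Ioo 0 a)) : IntervalIntegrable g volume c d := by
  rw [intervalIntegrable_iff_integrableOn_Ioc_of_le hcd, integrableOn_Ioc_iff_integrableOn_Ioo]
  exact intOn_sub h0 hda hg

lemma diff_eq {a : ℝ} {u g : ℝ → ℝ} (hg : IntegrableOn g (Ioo 0 a))
    (hu : ∀ x ∈ Icc 0 a, u x = 1 + ∫ s in (0:ℝ)..x, g s)
    {c d : ℝ} (h0 : 0 ≤ c) (hcd : c ≤ d) (hda : d ≤ a) :
    u d - u c = ∫ x in Ioo c d, g x := by
  have hc : u c = 1 + ∫ s in (0:ℝ)..c, g s := hu c ⟨h0, hcd.trans hda⟩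
  have hd : u d = 1 + ∫ s in (0:ℝ)..d, g s := hu d ⟨h0.trans hcd, hda⟩
  have h1 : IntervalIntegrable g volume 0 d := ivl_int le_rfl (h0.trans hcd) hda hg
  have h2 : IntervalIntegrable g volume 0 c := ivl_int le_rfl h0 (hcd.trans hda) hg
  rw [hc, hd]
  have := intervalIntegral.integral_interval_sub_left h1 h2
  rw [← integral_Ioc_eq_integral_Ioo, ← intervalIntegral.integral_of_le hcd, ← this]
  ring

lemma sqrt_facts {l : ℝ} (hl : 0 < l) :
    0 < Real.sqrt (2 * l) ∧ Real.sqrt (2 * l) ^ 2 = 2 * l ∧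
      Real.sqrt (2 / l) = 2 / Real.sqrt (2 * l) := by
  have h1 : 0 < Real.sqrt (2 * l) := Real.sqrt_pos.2 (by linarith)
  have h2 : Real.sqrt (2 * l) ^ 2 = 2 * l := Real.sq_sqrt (by linarith)
  refine ⟨h1, h2, ?_⟩
  rw [eq_div_iff h1.ne', ← Real.sqrt_mul (by positivity)]
  rw [show 2 / l * (2 * l) = 4 by field_simp; ring]
  rw [show (4:ℝ) = 2^2 by norm_num, Real.sqrt_sq (by norm_num)]

lemma amgm {l t : ℝ} (hl : 0 < l) (ht : 0 < t) :
    Real.sqrt (2 * l) ≤ 1 / (2 * t) + l * t ∧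
    (1 / (2 * t) + l * t = Real.sqrt (2 * l) → t = 1 / Real.sqrt (2 * l)) := by
  obtain ⟨h1, h2, -⟩ := sqrt_facts hl
  set s := Real.sqrt (2 * l)
  have key : 1 / (2 * t) + l * t - s = (1 - s * t) ^ 2 / (2 * t) := by
    rw [eq_div_iff (by positivity : (2:ℝ) * t ≠ 0)]
    have e : 1 / (2 * t) * (2 * t) = 1 := by field_simp
    linear_combination e + (-(t ^ 2)) * h2
  constructor
  · nlinarith [sq_nonneg (1 - s * t), div_nonneg (sq_nonneg (1 - s*t)) (by linarith : (0:ℝ) ≤ 2*t)]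
  · intro heq
    have : (1 - s * t) ^ 2 / (2 * t) = 0 := by rw [← key]; linarith
    have h3 : (1 - s * t) ^ 2 = 0 := by
      rcases div_eq_zero_iff.1 this with h | h
      · exact h
      · exfalso; linarith
    have := pow_eq_zero_iff (n := 2) (by norm_num) |>.1 h3
    have hst : s * t = 1 := by linarith
    rw [eq_div_iff h1.ne']; linarith [mul_comm s t]

lemma split3 {f : ℝ → ℝ} {p q r t : ℝ} (h1 : p < q) (h2 : q ≤ r) (h3 : r ≤ t)
    (hf : IntegrableOn f (Ioo p t)) :
    ∫ x in Ioo p t, f x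
      = (∫ x in Ioo p q, f x) + (∫ x in Ioo q r, f x) + (∫ x in Ioo r t, f x) := by
  have hqt : q ≤ t := h2.trans h3
  have hdecomp : Ioo p t = (Ioo p q ∪ Ico q r) ∪ Ico r t := by
    ext x
    simp only [mem_Ioo, mem_union, mem_Ico]
    constructor
    · rintro ⟨hp, ht'⟩
      rcases lt_or_ge x q with h | h
      · exact Or.inl (Or.inl ⟨hp, h⟩)
      · rcases lt_or_ge x r with h' | h'
        · exact Or.inl (Or.inr ⟨h, h'⟩)
        · exact Or.inr ⟨h', ht'⟩
    · rintro ((⟨hp, hq⟩ | ⟨hq, hr⟩) | ⟨hr, ht'⟩)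
      · exact ⟨hp, lt_of_lt_of_le hq hqt⟩
      · exact ⟨lt_of_lt_of_le h1 hq, lt_of_lt_of_le hr h3⟩
      · exact ⟨lt_of_lt_of_le h1 (h2.trans hr), ht'⟩
  have d1 : Disjoint (Ioo p q) (Ico q r) := by
    apply Set.disjoint_left.2; rintro x ⟨_, hx2⟩ ⟨hx3, _⟩; exact absurd hx3 (not_le.2 hx2)
  have d2 : Disjoint (Ioo p q ∪ Ico q r) (Ico r t) := by
    apply Set.disjoint_left.2
    rintro x hx ⟨hx3, _⟩
    rcases hx with ⟨_, hx2⟩ | ⟨_, hx2⟩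
    · exact absurd hx3 (not_le.2 (lt_of_lt_of_le hx2 h2))
    · exact absurd hx3 (not_le.2 hx2)
  have i1 : IntegrableOn f (Ioo p q) := hf.mono_set (Ioo_subset_Ioo le_rfl hqt)
  have i2 : IntegrableOn f (Ico q r) := by
    rw [integrableOn_Ico_iff_integrableOn_Ioo]
    exact hf.mono_set (fun x hx => ⟨lt_of_lt_of_le h1 hx.1.le, lt_of_lt_of_le hx.2 h3⟩)
  have i3 : IntegrableOn f (Ico r t) := by
    rw [integrableOn_Ico_iff_integrableOn_Ioo]
    exact hf.mono_set (fun x hx => ⟨lt_of_lt_of_le h1 (h2.trans hx.1.le), hx.2⟩)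
  rw [hdecomp, setIntegral_union d2 measurableSet_Ico (i1.union i2) i3,
    setIntegral_union d1 measurableSet_Ico i1 i2,
    integral_Ico_eq_integral_Ioo, integral_Ico_eq_integral_Ioo]

lemma intOn_bdd {f : ℝ → ℝ} {c d C : ℝ} (hm : Measurable f) (hb : ∀ x, |f x| ≤ C) :
    IntegrableOn f (Ioo c d) :=
  const_intOn.mono' hm.aestronglyMeasurable (ae_of_all _ fun x => by simpa using hb x)

lemma split2 {f : ℝ → ℝ} {p q t : ℝ} (h1 : p < q) (h2 : q ≤ t)
    (hf : IntegrableOn f (Ioo p t)) :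
    ∫ x in Ioo p t, f x = (∫ x in Ioo p q, f x) + ∫ x in Ioo q t, f x := by
  have := split3 h1 le_rfl h2 hf
  simpa [Set.Ioo_self] using this

end Helpers

section Candidates

lemma adm_one (a : ℝ) : Adm1D a (fun _ => 1) (fun _ => 0) := by
  refine ⟨continuousOn_const, ?_, fun x _ => by simp, rfl, rfl⟩
  exact memLp_const 0

lemma cost_one (a l : ℝ) (ha : 0 ≤ a) : cost1D a l (fun _ => 1) (fun _ => 0) = l * a := by
  unfold cost1D
  have h1 : {s | s ∈ Ioo (0:ℝ) a ∧ (1:ℝ) ≠ 0} = Ioo 0 a := by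
    ext x; simp
  rw [h1, Real.volume_Ioo, ENNReal.toReal_ofReal (by linarith)]
  simp

noncomputable def gTwo (a l : ℝ) (x : ℝ) : ℝ :=
  if x ≤ 1 / Real.sqrt (2 * l) then -(Real.sqrt (2 * l))
  else if x ≤ a - 1 / Real.sqrt (2 * l) then 0
  else Real.sqrt (2 * l)

lemma gTwo_meas (a l : ℝ) : Measurable (gTwo a l) := by
  unfold gTwo
  exact Measurable.ite measurableSet_Iic measurable_const <|
    Measurable.ite measurableSet_Iic measurable_const measurable_const

lemma gTwo_abs (a l : ℝ) (x : ℝ) : |gTwo a l x| ≤ Real.sqrt (2 * l) := by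
  have h := Real.sqrt_nonneg (2 * l)
  unfold gTwo
  split_ifs
  · rw [abs_neg, abs_of_nonneg h]
  · simpa using h
  · rw [abs_of_nonneg h]

lemma gTwo_int (a l : ℝ) {c d : ℝ} : IntegrableOn (gTwo a l) (Ioo c d) :=
  intOn_bdd (gTwo_meas a l) (gTwo_abs a l)

lemma uTwo_int_id {a l : ℝ} (hl : 0 < l) (ha2 : 2 / Real.sqrt (2 * l) ≤ a) :
    ∀ x ∈ Icc 0 a, uTwo a l x = 1 + ∫ t in (0:ℝ)..x, gTwo a l t := by
  obtain ⟨hs, h2, -⟩ := sqrt_facts hl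
  set sq := Real.sqrt (2 * l) with hsq
  set c1 := 1 / sq with hc1
  set c2 := a - 1 / sq with hc2
  have htwo : 2 / sq = 1 / sq + 1 / sq := by ring
  have hc : c1 ≤ c2 := by rw [hc1, hc2]; linarith [ha2, htwo]
  have hc1pos : 0 < c1 := by positivity
  have hsc1 : sq * c1 = 1 := by rw [hc1]; field_simp
  have hsc2 : sq * c2 = sq * a - 1 := by rw [hc2]; field_simp
  intro x hx
  have hx0 : (0:ℝ) ≤ x := hx.1
  have hIoo : ∫ t in (0:ℝ)..x, gTwo a l t = ∫ t in Ioo 0 x, gTwo a l t := by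
    rw [intervalIntegral.integral_of_le hx0, integral_Ioc_eq_integral_Ioo]
  rcases le_or_gt x c1 with hx1 | hx1
  · have hval : ∫ t in Ioo 0 x, gTwo a l t = -sq * x := by
      rw [setIntegral_congr_fun measurableSet_Ioo
        (fun t ht => by unfold gTwo; rw [if_pos (le_of_lt (lt_of_lt_of_le ht.2 hx1))]),
        setIntegral_const, measureReal_def, Real.volume_Ioo, ENNReal.toReal_ofReal (by linarith), smul_eq_mul]
      ring
    rw [hIoo, hval]
    unfold uTwo
    rw [if_pos hx1]
    ring
  · rcases le_or_gt x c2 with hx2 | hx2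
    · have hsplit := split2 hc1pos hx1.le (gTwo_int a l)
      have hp1 : ∫ t in Ioo 0 c1, gTwo a l t = -1 := by
        rw [setIntegral_congr_fun measurableSet_Ioo
          (fun t ht => by unfold gTwo; rw [if_pos ht.2.le]),
          setIntegral_const, measureReal_def, Real.volume_Ioo, ENNReal.toReal_ofReal (by linarith), smul_eq_mul]
        simp only [sub_zero]
        nlinarith [hsc1]
      have hp2 : ∫ t in Ioo c1 x, gTwo a l t = 0 := by
        rw [setIntegral_congr_fun (g := fun _ => (0:ℝ)) measurableSet_Ioo
          (fun t ht => by
            unfold gTwo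
            rw [if_neg (not_le.2 ht.1), if_pos (le_of_lt (lt_of_lt_of_le ht.2 hx2))])]
        simp
      rw [hIoo, hsplit, hp1, hp2]
      unfold uTwo
      rw [if_neg (not_le.2 hx1), if_pos hx2]
      ring
    · have hsplit := split3 hc1pos hc hx2.le (gTwo_int a l)
      have hp1 : ∫ t in Ioo 0 c1, gTwo a l t = -1 := by
        rw [setIntegral_congr_fun measurableSet_Ioo
          (fun t ht => by unfold gTwo; rw [if_pos ht.2.le]),
          setIntegral_const, measureReal_def, Real.volume_Ioo, ENNReal.toReal_ofReal (by linarith), smul_eq_mul]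
        simp only [sub_zero]
        nlinarith [hsc1]
      have hp2 : ∫ t in Ioo c1 c2, gTwo a l t = 0 := by
        rw [setIntegral_congr_fun (g := fun _ => (0:ℝ)) measurableSet_Ioo
          (fun t ht => by
            unfold gTwo
            rw [if_neg (not_le.2 ht.1), if_pos ht.2.le])]
        simp
      have hp3 : ∫ t in Ioo c2 x, gTwo a l t = sq * (x - c2) := by
        rw [setIntegral_congr_fun (g := fun _ => sq) measurableSet_Ioo
          (fun t ht => by
            unfold gTwo
            rw [if_neg (not_le.2 (lt_of_le_of_lt hc ht.1)), if_neg (not_le.2 ht.1)]),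
          setIntegral_const, measureReal_def, Real.volume_Ioo, ENNReal.toReal_ofReal (by linarith [hx2]),
          smul_eq_mul]
        ring
      rw [hIoo, hsplit, hp1, hp2, hp3]
      unfold uTwo
      rw [if_neg (not_le.2 (lt_of_le_of_lt hc hx2)), if_neg (not_le.2 hx2)]
      nlinarith [hsc2]

lemma uTwo_cont {a l : ℝ} (hl : 0 < l) (ha2 : 2 / Real.sqrt (2 * l) ≤ a) :
    Continuous (uTwo a l) := by
  obtain ⟨hs, h2, -⟩ := sqrt_facts hl
  set sq := Real.sqrt (2 * l) with hsq
  have htwo : (2:ℝ) / sq = 1 / sq + 1 / sq := by ring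
  have hc : 1 / sq ≤ a - 1 / sq := by linarith [ha2, htwo]
  unfold uTwo
  apply Continuous.if_le (by fun_prop) ?_ continuous_id continuous_const ?_
  · apply Continuous.if_le continuous_const (by fun_prop) continuous_id continuous_const ?_
    intro x hx
    simp only [id_eq] at hx
    rw [hx]
    have : sq * (a - 1 / sq) = sq * a - 1 := by field_simp
    linarith [this]
  · intro x hx
    simp only [id_eq] at hx
    rw [hx, if_pos hc]
    have : sq * (1 / sq) = 1 := by field_simp
    linarith [this]

lemma adm_uTwo {a l : ℝ} (hl : 0 < l) (ha2 : 2 / Real.sqrt (2 * l) ≤ a) :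
    Adm1D a (uTwo a l) (gTwo a l) := by
  obtain ⟨hs, h2, -⟩ := sqrt_facts hl
  have ha : 0 < a := lt_of_lt_of_le (by positivity) ha2
  have htwo : (2:ℝ) / Real.sqrt (2*l) = 1 / Real.sqrt (2*l) + 1 / Real.sqrt (2*l) := by ring
  refine ⟨(uTwo_cont hl ha2).continuousOn, ?_, uTwo_int_id hl ha2, ?_, ?_⟩
  · have := @fin_restrict a
    exact MemLp.of_bound (gTwo_meas a l).aestronglyMeasurable (Real.sqrt (2*l))
      (ae_of_all _ fun x => by simpa [Real.norm_eq_abs] using gTwo_abs a l x)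
  · unfold uTwo
    rw [if_pos (by positivity : (0:ℝ) ≤ 1 / Real.sqrt (2*l))]
    ring
  · unfold uTwo
    have h1a : 1 / Real.sqrt (2*l) < a := by
      have : (0:ℝ) < 1 / Real.sqrt (2*l) := by positivity
      linarith [ha2, htwo]
    rw [if_neg (not_le.2 h1a), if_neg (not_le.2 (sub_lt_self a (by positivity)))]
    ring

lemma uTwo_ne_set {a l : ℝ} (hl : 0 < l) (ha2 : 2 / Real.sqrt (2 * l) ≤ a) :
    {x | x ∈ Ioo 0 a ∧ uTwo a l x ≠ 0}
      = Ioo 0 (1 / Real.sqrt (2*l)) ∪ Ioo (a - 1 / Real.sqrt (2*l)) a := by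
  obtain ⟨hs, h2, -⟩ := sqrt_facts hl
  set sq := Real.sqrt (2 * l) with hsq
  set c1 := 1 / sq with hc1
  set c2 := a - 1 / sq with hc2
  have htwo : (2:ℝ) / sq = 1 / sq + 1 / sq := by ring
  have hc : c1 ≤ c2 := by rw [hc1, hc2]; linarith [ha2, htwo]
  have hc1pos : 0 < c1 := by positivity
  have hsc1 : sq * c1 = 1 := by rw [hc1]; field_simp
  have hsc2 : sq * c2 = sq * a - 1 := by rw [hc2]; field_simp
  have hc2a : c2 < a := by rw [hc2]; linarith
  ext x
  simp only [mem_setOf_eq, mem_Ioo, mem_union]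
  constructor
  · rintro ⟨⟨h0, hxa⟩, hne⟩
    rcases lt_trichotomy x c1 with h | h | h
    · exact Or.inl ⟨h0, h⟩
    · exfalso; apply hne
      unfold uTwo
      rw [if_pos h.le, ← hsq, h]
      linarith [hsc1]
    · rcases le_or_gt x c2 with h' | h'
      · exfalso; apply hne
        unfold uTwo
        rw [if_neg (not_le.2 h), if_pos h']
      · exact Or.inr ⟨h', hxa⟩
  · rintro (⟨h0, hx1⟩ | ⟨hx1, hxa⟩)
    · refine ⟨⟨h0, lt_of_lt_of_le hx1 (hc.trans hc2a.le)⟩, ?_⟩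
      unfold uTwo
      rw [if_pos hx1.le, ← hsq]
      nlinarith [hsc1]
    · refine ⟨⟨lt_of_le_of_lt (hc1pos.le.trans hc) hx1, hxa⟩, ?_⟩
      unfold uTwo
      rw [if_neg (not_le.2 (lt_of_le_of_lt hc hx1)), if_neg (not_le.2 hx1), ← hsq]
      nlinarith [hsc2]

lemma cost_uTwo {a l : ℝ} (hl : 0 < l) (ha2 : 2 / Real.sqrt (2 * l) ≤ a) :
    cost1D a l (uTwo a l) (gTwo a l) = 2 * Real.sqrt (2 * l) := by
  obtain ⟨hs, h2, -⟩ := sqrt_facts hl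
  set sq := Real.sqrt (2 * l) with hsq
  set c1 := 1 / sq with hc1
  set c2 := a - 1 / sq with hc2
  have htwo : (2:ℝ) / sq = 1 / sq + 1 / sq := by ring
  have hc : c1 ≤ c2 := by rw [hc1, hc2]; linarith [ha2, htwo]
  have hc1pos : 0 < c1 := by positivity
  have hc2a : c2 < a := by rw [hc2]; linarith
  have hsqb : ∀ x, gTwo a l x ^ 2 ≤ sq ^ 2 := by
    intro x
    have hb := gTwo_abs a l x
    nlinarith [abs_nonneg (gTwo a l x), sq_abs (gTwo a l x)]
  have hintsq : IntegrableOn (fun x => gTwo a l x ^ 2 / 2) (Ioo 0 a) := by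
    apply intOn_bdd (C := sq ^ 2 / 2) (((gTwo_meas a l).pow_const 2).div_const 2)
    intro x
    rw [abs_of_nonneg (by positivity : (0:ℝ) ≤ gTwo a l x ^ 2 / 2)]
    linarith [hsqb x]
  have hsplit := split3 (f := fun x => gTwo a l x ^ 2 / 2) hc1pos hc hc2a.le hintsq
  have hp1 : ∫ t in Ioo 0 c1, gTwo a l t ^ 2 / 2 = sq ^ 2 / 2 * c1 := by
    rw [setIntegral_congr_fun (g := fun _ => sq ^ 2 / 2) measurableSet_Ioo
      (fun t ht => by unfold gTwo; rw [if_pos ht.2.le, ← hsq]; ring),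
      setIntegral_const, measureReal_def, Real.volume_Ioo, ENNReal.toReal_ofReal (by linarith), smul_eq_mul]
    ring
  have hp2 : ∫ t in Ioo c1 c2, gTwo a l t ^ 2 / 2 = 0 := by
    rw [setIntegral_congr_fun (g := fun _ => (0:ℝ)) measurableSet_Ioo
      (fun t ht => by
        unfold gTwo
        rw [if_neg (not_le.2 ht.1), if_pos ht.2.le]
        ring)]
    simp
  have hp3 : ∫ t in Ioo c2 a, gTwo a l t ^ 2 / 2 = sq ^ 2 / 2 * (a - c2) := by
    rw [setIntegral_congr_fun (g := fun _ => sq ^ 2 / 2) measurableSet_Ioo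
      (fun t ht => by
        unfold gTwo
        rw [if_neg (not_le.2 (lt_of_le_of_lt hc ht.1)), if_neg (not_le.2 ht.1), ← hsq]),
      setIntegral_const, measureReal_def, Real.volume_Ioo, ENNReal.toReal_ofReal (by linarith [hc2a]), smul_eq_mul]
    ring
  have hmeas : (volume {x | x ∈ Ioo 0 a ∧ uTwo a l x ≠ 0}).toReal = c1 + (a - c2) := by
    rw [uTwo_ne_set hl ha2, ← hsq, ← hc1, ← hc2]
    have hdisj : Disjoint (Ioo (0:ℝ) c1) (Ioo c2 a) := by
      apply Set.disjoint_left.2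
      rintro x ⟨_, hx2⟩ ⟨hx3, _⟩
      exact absurd hx3 (not_lt.2 (le_of_lt (lt_of_lt_of_le hx2 hc)))
    rw [measure_union hdisj measurableSet_Ioo, Real.volume_Ioo, Real.volume_Ioo,
      ENNReal.toReal_add ENNReal.ofReal_ne_top ENNReal.ofReal_ne_top,
      ENNReal.toReal_ofReal (by linarith), ENNReal.toReal_ofReal (by linarith [hc2a])]
    ring_nf
  unfold cost1D
  rw [hsplit, hp1, hp2, hp3, hmeas]
  have hac2 : a - c2 = 1 / sq := by rw [hc2]; ring
  have hlval : l = sq ^ 2 / 2 := by linarith [h2]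
  rw [hac2, hc1, hlval]
  field_simp
  ring

end Candidates

section Main

lemma uval {a : ℝ} {u g : ℝ → ℝ}
    (hu : ∀ x ∈ Icc 0 a, u x = 1 + ∫ t in (0:ℝ)..x, g t) :
    ∀ x ∈ Icc 0 a, u x = 1 + ∫ t in Ioo 0 x, g t := fun x hx => by
  rw [hu x hx, intervalIntegral.integral_of_le hx.1, integral_Ioc_eq_integral_Ioo]

lemma dichotomy {a l : ℝ} (ha : 0 < a) (hl : 0 < l) {u g : ℝ → ℝ}
    (hadm : Adm1D a u g) :
    ((∀ x ∈ Ioo 0 a, u x ≠ 0) ∧ l * a ≤ cost1D a l u g ∧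
      (cost1D a l u g = l * a → ∀ x ∈ Icc 0 a, u x = 1)) ∨
    ((∃ x ∈ Ioo 0 a, u x = 0) ∧ 2 * Real.sqrt (2 * l) ≤ cost1D a l u g ∧
      (cost1D a l u g = 2 * Real.sqrt (2 * l) → ∀ x ∈ Icc 0 a, u x = uTwo a l x)) := by
  obtain ⟨hcont, hg2, hu, hu0, hua⟩ := hadm
  have hgint : IntegrableOn g (Ioo 0 a) := integrable_g hg2
  have hgsq : IntegrableOn (fun x => g x ^ 2) (Ioo 0 a) := integrable_gsq hg2
  have hgsq2 : IntegrableOn (fun x => g x ^ 2 / 2) (Ioo 0 a) := hgsq.div_const 2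
  set A := {x | x ∈ Ioo (0:ℝ) a ∧ u x ≠ 0} with hA
  have hAset : A = Ioo 0 a ∩ u ⁻¹' ({0}ᶜ) := by
    ext x; simp [hA, mem_preimage]
  have hAopen : IsOpen A := by
    rw [hAset]
    exact (hcont.mono Ioo_subset_Icc_self).isOpen_inter_preimage isOpen_Ioo
      isOpen_compl_singleton
  have hAsub : A ⊆ Ioo 0 a := fun x hx => hx.1
  have hAfin : volume A ≠ ⊤ :=
    ne_top_of_le_ne_top (by rw [Real.volume_Ioo]; exact ENNReal.ofReal_ne_top)
      (measure_mono hAsub)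
  by_cases hzero : ∃ x ∈ Ioo (0:ℝ) a, u x = 0
  · right
    refine ⟨hzero, ?_⟩
    obtain ⟨hs, h2, -⟩ := sqrt_facts hl
    set sq := Real.sqrt (2 * l) with hsq
    set Z := Icc (0:ℝ) a ∩ u ⁻¹' {0} with hZ
    have hZclosed : IsClosed Z := hcont.preimage_isClosed_of_isClosed isClosed_Icc
      isClosed_singleton
    have hZne : Z.Nonempty := by
      obtain ⟨x, hx, hx0⟩ := hzero
      exact ⟨x, Ioo_subset_Icc_self hx, hx0⟩
    have hZbb : BddBelow Z := ⟨0, fun x hx => hx.1.1⟩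
    have hZba : BddAbove Z := ⟨a, fun x hx => hx.1.2⟩
    set x₀ := sInf Z with hx₀
    set x₁ := sSup Z with hx₁
    have hx₀Z : x₀ ∈ Z := hZclosed.csInf_mem hZne hZbb
    have hx₁Z : x₁ ∈ Z := hZclosed.csSup_mem hZne hZba
    have hux₀ : u x₀ = 0 := hx₀Z.2
    have hux₁ : u x₁ = 0 := hx₁Z.2
    have hx01 : x₀ ≤ x₁ := csInf_le_csSup hZne hZbb hZba
    have hx0pos : 0 < x₀ := by
      rcases hx₀Z.1.1.lt_or_eq with h | h
      · exact h
      · exfalso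
        have : u x₀ = 1 := by rw [← h]; exact hu0
        rw [this] at hux₀; norm_num at hux₀
    have hx1a : x₁ < a := by
      rcases hx₁Z.1.2.lt_or_eq with h | h
      · exact h
      · exfalso
        have : u x₁ = 1 := by rw [h]; exact hua
        rw [this] at hux₁; norm_num at hux₁
    have hne_left : ∀ x ∈ Ioo (0:ℝ) x₀, u x ≠ 0 := by
      intro x hx hcon
      exact absurd (csInf_le hZbb ⟨⟨hx.1.le, hx.2.le.trans (hx01.trans hx1a.le)⟩, hcon⟩)
        (not_le.2 hx.2)
    have hne_right : ∀ x ∈ Ioo x₁ a, u x ≠ 0 := by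
      intro x hx hcon
      exact absurd (le_csSup hZba ⟨⟨(hx0pos.trans_le (hx01.trans hx.1.le)).le, hx.2.le⟩, hcon⟩)
        (not_le.2 hx.1)
    have hx1nn : (0:ℝ) ≤ x₁ := (hx0pos.trans_le hx01).le
    have hx0a : x₀ ≤ a := hx01.trans hx1a.le
    -- Cauchy–Schwarz on the two side intervals
    have hd1 : u x₀ - u 0 = ∫ x in Ioo 0 x₀, g x := diff_eq hgint hu le_rfl hx0pos.le hx0a
    have hv1 : ∫ x in Ioo 0 x₀, g x = -1 := by rw [← hd1, hux₀, hu0]; ring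
    have hd3 : u a - u x₁ = ∫ x in Ioo x₁ a, g x := diff_eq hgint hu hx1nn hx1a.le le_rfl
    have hv3 : ∫ x in Ioo x₁ a, g x = 1 := by rw [← hd3, hux₁, hua]; ring
    have cs1 := cs_bound hx0pos (intOn_sub le_rfl hx0a hgint)
      (hgsq.mono_set (Ioo_subset_Ioo le_rfl hx0a)) hv1
    have cs3 := cs_bound hx1a (intOn_sub hx1nn le_rfl hgint)
      (hgsq.mono_set (Ioo_subset_Ioo hx1nn le_rfl)) hv3
    have e1 : ((-1:ℝ)) ^ 2 / (2 * (x₀ - 0)) = 1 / (2 * x₀) := by norm_num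
    have e3 : ((1:ℝ)) ^ 2 / (2 * (a - x₁)) = 1 / (2 * (a - x₁)) := by norm_num
    have k1 : 1 / (2 * x₀) ≤ ∫ x in Ioo 0 x₀, g x ^ 2 / 2 := e1 ▸ cs1.1
    have k3 : 1 / (2 * (a - x₁)) ≤ ∫ x in Ioo x₁ a, g x ^ 2 / 2 := e3 ▸ cs3.1
    have hsplit := split3 (f := fun x => g x ^ 2 / 2) hx0pos hx01 hx1a.le hgsq2
    have hmid : 0 ≤ ∫ x in Ioo x₀ x₁, g x ^ 2 / 2 :=
      setIntegral_nonneg measurableSet_Ioo fun x _ => by positivity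
    set B := Ioo (0:ℝ) x₀ ∪ Ioo x₁ a with hB
    have hBsub : B ⊆ A := by
      rintro x (hx | hx)
      · exact ⟨⟨hx.1, hx.2.trans_le hx0a⟩, hne_left x hx⟩
      · exact ⟨⟨lt_of_le_of_lt hx1nn hx.1, hx.2⟩, hne_right x hx⟩
    have hBdisj : Disjoint (Ioo (0:ℝ) x₀) (Ioo x₁ a) := by
      apply Set.disjoint_left.2
      rintro x ⟨_, h1⟩ ⟨h2, _⟩
      exact absurd (h1.trans_le hx01) (not_lt.2 h2.le)
    have hBvol : volume B = ENNReal.ofReal (x₀ + (a - x₁)) := by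
      rw [hB, measure_union hBdisj measurableSet_Ioo, Real.volume_Ioo, Real.volume_Ioo,
        sub_zero, ← ENNReal.ofReal_add hx0pos.le (by linarith)]
    have hMle : x₀ + (a - x₁) ≤ (volume A).toReal := by
      rw [← ENNReal.toReal_ofReal (by linarith : (0:ℝ) ≤ x₀ + (a - x₁)), ← hBvol]
      exact ENNReal.toReal_mono hAfin (measure_mono hBsub)
    have am1 := amgm hl hx0pos
    have am3 := amgm hl (by linarith : (0:ℝ) < a - x₁)
    have hlM : l * (x₀ + (a - x₁)) ≤ l * (volume A).toReal :=
      mul_le_mul_of_nonneg_left hMle hl.le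
    have hcost : cost1D a l u g
        = ((∫ x in Ioo 0 x₀, g x ^ 2 / 2) + (∫ x in Ioo x₀ x₁, g x ^ 2 / 2)
            + ∫ x in Ioo x₁ a, g x ^ 2 / 2) + l * (volume A).toReal := by
      unfold cost1D
      rw [← hA, ← hsplit]
    constructor
    · rw [hcost]
      have a1 := am1.1
      have a3 := am3.1
      rw [← hsq] at a1 a3
      linarith [k1, k3, hmid, hlM, a1, a3]
    · intro heq x hx
      rw [hcost] at heq
      have a1 := am1.1
      have a3 := am3.1
      rw [← hsq] at a1 a3
      have eqI1 : (∫ x in Ioo 0 x₀, g x ^ 2 / 2) = 1 / (2 * x₀) := by linarith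
      have eqI3 : (∫ x in Ioo x₁ a, g x ^ 2 / 2) = 1 / (2 * (a - x₁)) := by linarith
      have eqMl : l * (volume A).toReal = l * (x₀ + (a - x₁)) := by linarith
      have eqam1 : 1 / (2 * x₀) + l * x₀ = Real.sqrt (2 * l) := by rw [← hsq]; linarith
      have eqam3 : 1 / (2 * (a - x₁)) + l * (a - x₁) = Real.sqrt (2 * l) := by
        rw [← hsq]; linarith
      have hx0val : x₀ = 1 / sq := by rw [hsq]; exact am1.2 eqam1
      have hax1val : a - x₁ = 1 / sq := by rw [hsq]; exact am3.2 eqam3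
      have hx1val : x₁ = a - 1 / sq := by linarith
      have hsqinv : sq * (1 / sq) = 1 := by field_simp
      have hg1ae : ∀ᵐ t ∂(volume.restrict (Ioo 0 x₀)), g t = -1 / (x₀ - 0) :=
        cs1.2 (by rw [e1]; exact eqI1)
      have hg3ae : ∀ᵐ t ∂(volume.restrict (Ioo x₁ a)), g t = 1 / (a - x₁) :=
        cs3.2 (by rw [e3]; exact eqI3)
      have hgc1 : ∀ᵐ t ∂(volume.restrict (Ioo 0 x₀)), g t = -sq := by
        filter_upwards [hg1ae] with t ht
        rw [ht, sub_zero, hx0val]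
        field_simp
      have hgc3 : ∀ᵐ t ∂(volume.restrict (Ioo x₁ a)), g t = sq := by
        filter_upwards [hg3ae] with t ht
        rw [ht, hax1val]
        field_simp
      have hMtoReal : (volume A).toReal = x₀ + (a - x₁) := mul_left_cancel₀ hl.ne' eqMl
      have hMeq : volume A = ENNReal.ofReal (x₀ + (a - x₁)) := by
        rw [← ENNReal.ofReal_toReal hAfin, hMtoReal]
      have hdiff : volume (A \ B) = 0 := by
        rw [measure_diff hBsub (measurableSet_Ioo.union measurableSet_Ioo).nullMeasurableSet
          (by rw [hBvol]; exact ENNReal.ofReal_ne_top), hMeq, hBvol, tsub_self]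
      have hmidzero : ∀ t ∈ Ioo x₀ x₁, u t = 0 := by
        intro t ht
        by_contra hne
        have htA : t ∈ A ∩ Ioo x₀ x₁ :=
          ⟨⟨⟨hx0pos.trans ht.1, ht.2.trans hx1a⟩, hne⟩, ht⟩
        have hsubdiff : A ∩ Ioo x₀ x₁ ⊆ A \ B := by
          rintro y ⟨hyA, hy⟩
          refine ⟨hyA, ?_⟩
          rintro (h | h)
          · exact absurd h.2 (not_lt.2 hy.1.le)
          · exact absurd h.1 (not_lt.2 hy.2.le)
        have hopen : IsOpen (A ∩ Ioo x₀ x₁) := hAopen.inter isOpen_Ioo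
        have hpos := hopen.measure_pos volume ⟨t, htA⟩
        have hz : volume (A ∩ Ioo x₀ x₁) = 0 :=
          le_antisymm (hdiff ▸ measure_mono hsubdiff) zero_le
        exact absurd hz hpos.ne'
      -- now compute u on the three regions
      rcases le_or_gt x x₀ with hc | hc
      · have hgx : g =ᵐ[volume.restrict (Ioo 0 x)] (fun _ => -sq) :=
          hgc1.filter_mono (ae_mono (Measure.restrict_mono (Ioo_subset_Ioo le_rfl hc) le_rfl))
        have hintx : ∫ t in Ioo 0 x, g t = -sq * x := by
          rw [integral_congr_ae hgx, setIntegral_const, measureReal_def, Real.volume_Ioo, sub_zero,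
            ENNReal.toReal_ofReal hx.1, smul_eq_mul]
          ring
        rw [uval hu x hx, hintx]
        unfold uTwo
        rw [← hsq, if_pos (by rw [← hx0val]; exact hc)]
        ring
      · rcases le_or_gt x x₁ with hc2 | hc2
        · have hux : u x = 0 := by
            rcases hc2.lt_or_eq with h | h
            · exact hmidzero x ⟨hc, h⟩
            · rw [h]; exact hux₁
          rw [hux]
          unfold uTwo
          rw [← hsq, if_neg (by rw [← hx0val]; exact not_le.2 hc),
            if_pos (by rw [← hax1val]; linarith)]
        · have hd : u x - u x₁ = ∫ t in Ioo x₁ x, g t :=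
            diff_eq hgint hu hx1nn hc2.le hx.2
          have hgx : g =ᵐ[volume.restrict (Ioo x₁ x)] (fun _ => sq) :=
            hgc3.filter_mono (ae_mono (Measure.restrict_mono (Ioo_subset_Ioo le_rfl hx.2) le_rfl))
          have hintx : ∫ t in Ioo x₁ x, g t = sq * (x - x₁) := by
            rw [integral_congr_ae hgx, setIntegral_const, measureReal_def, Real.volume_Ioo,
              ENNReal.toReal_ofReal (by linarith), smul_eq_mul]
            ring
          have hux : u x = sq * (x - x₁) := by
            rw [← hintx, ← hd, hux₁]; ring
          rw [hux]
          unfold uTwo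
          rw [← hsq, if_neg (by rw [← hx0val]; push_neg; linarith),
            if_neg (by rw [← hax1val]; push_neg; linarith)]
          linear_combination sq * hax1val + hsqinv
  · left
    push_neg at hzero
    refine ⟨hzero, ?_, ?_⟩
    · have hAeq : A = Ioo 0 a := by
        apply Subset.antisymm hAsub
        intro x hx; exact ⟨hx, hzero x hx⟩
      unfold cost1D
      rw [← hA, hAeq, Real.volume_Ioo, sub_zero, ENNReal.toReal_ofReal ha.le]
      have : 0 ≤ ∫ x in Ioo 0 a, g x ^ 2 / 2 :=
        setIntegral_nonneg measurableSet_Ioo (fun x _ => by positivity)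
      linarith
    · intro heq x hx
      have hAeq : A = Ioo 0 a := by
        apply Subset.antisymm hAsub
        intro y hy; exact ⟨hy, hzero y hy⟩
      have hint0 : ∫ x in Ioo 0 a, g x ^ 2 / 2 = 0 := by
        unfold cost1D at heq
        rw [← hA, hAeq, Real.volume_Ioo, sub_zero, ENNReal.toReal_ofReal ha.le] at heq
        linarith
      have hgz : (fun x => g x ^ 2 / 2) =ᵐ[volume.restrict (Ioo 0 a)] 0 :=
        (integral_eq_zero_iff_of_nonneg (fun x => by positivity) hgsq2).1 hint0
      have hgz' : g =ᵐ[volume.restrict (Ioo 0 x)] 0 := by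
        have hmono : volume.restrict (Ioo 0 x) ≤ volume.restrict (Ioo 0 a) :=
          Measure.restrict_mono (Ioo_subset_Ioo le_rfl hx.2) le_rfl
        filter_upwards [hgz.filter_mono (ae_mono hmono)] with t ht
        have : g t ^ 2 / 2 = 0 := ht
        nlinarith [this]
      rw [uval hu x hx, integral_congr_ae hgz']
      simp

end Main

section Final

lemma I1D_low {a l : ℝ} (ha : 0 < a) (hl : 0 < l) (h : l * a ≤ 2 * Real.sqrt (2 * l)) :
    I1D a l = l * a := by
  have hlb : ∀ c ∈ {c | ∃ u g, Adm1D a u g ∧ c = cost1D a l u g}, l * a ≤ c := by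
    rintro c ⟨u, g, hadm, rfl⟩
    rcases dichotomy ha hl hadm with ⟨-, hb, -⟩ | ⟨-, hb, -⟩
    · exact hb
    · linarith
  have hmem : l * a ∈ {c | ∃ u g, Adm1D a u g ∧ c = cost1D a l u g} :=
    ⟨_, _, adm_one a, (cost_one a l ha.le).symm⟩
  exact le_antisymm (csInf_le ⟨l * a, hlb⟩ hmem) (le_csInf ⟨_, hmem⟩ hlb)

lemma I1D_high {a l : ℝ} (ha : 0 < a) (hl : 0 < l) (h2a : 2 / Real.sqrt (2 * l) ≤ a)
    (h : 2 * Real.sqrt (2 * l) ≤ l * a) :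
    I1D a l = 2 * Real.sqrt (2 * l) := by
  have hlb : ∀ c ∈ {c | ∃ u g, Adm1D a u g ∧ c = cost1D a l u g},
      2 * Real.sqrt (2 * l) ≤ c := by
    rintro c ⟨u, g, hadm, rfl⟩
    rcases dichotomy ha hl hadm with ⟨-, hb, -⟩ | ⟨-, hb, -⟩
    · linarith
    · exact hb
  have hmem : 2 * Real.sqrt (2 * l) ∈ {c | ∃ u g, Adm1D a u g ∧ c = cost1D a l u g} :=
    ⟨_, _, adm_uTwo hl h2a, (cost_uTwo hl h2a).symm⟩
  exact le_antisymm (csInf_le ⟨2 * Real.sqrt (2 * l), hlb⟩ hmem) (le_csInf ⟨_, hmem⟩ hlb)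

end Final

theorem stmt14' (a l : ℝ) (ha : 0 < a) (hl : 0 < l) :
    (a < 2 * Real.sqrt (2 / l) →
      (∃ g, Min1D a l (fun _ => 1) g) ∧
      ∀ u g, Min1D a l u g → ∀ x ∈ Set.Icc 0 a, u x = 1) ∧
    (2 * Real.sqrt (2 / l) < a →
      (∃ g, Min1D a l (uTwo a l) g) ∧
      ∀ u g, Min1D a l u g → ∀ x ∈ Set.Icc 0 a, u x = uTwo a l x) ∧
    (a = 2 * Real.sqrt (2 / l) →
      (∃ g, Min1D a l (fun _ => 1) g) ∧ (∃ g, Min1D a l (uTwo a l) g) ∧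
      ∀ u g, Min1D a l u g →
        (∀ x ∈ Set.Icc 0 a, u x = 1) ∨ (∀ x ∈ Set.Icc 0 a, u x = uTwo a l x)) := by
  obtain ⟨hs, h2, h3⟩ := sqrt_facts hl
  have hthr : 2 * Real.sqrt (2 / l) = 4 / Real.sqrt (2 * l) := by rw [h3]; ring
  have hfour : 4 / Real.sqrt (2 * l) * Real.sqrt (2 * l) = 4 := by field_simp
  refine ⟨?_, ?_, ?_⟩
  · intro hlt
    rw [hthr] at hlt
    have hprod : a * Real.sqrt (2 * l) < 4 := by
      have := mul_lt_mul_of_pos_right hlt hs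
      rw [hfour] at this
      exact this
    have hla : l * a < 2 * Real.sqrt (2 * l) := by
      nlinarith [mul_lt_mul_of_pos_left hprod hs, h2, hs]
    have hI := I1D_low ha hl hla.le
    constructor
    · exact ⟨fun _ => 0, adm_one a, by rw [cost_one a l ha.le, hI]⟩
    · rintro u g ⟨hadm, hcost⟩ x hx
      rcases dichotomy ha hl hadm with ⟨-, -, heq⟩ | ⟨-, hb, -⟩
      · exact heq (by rw [hcost, hI]) x hx
      · rw [hcost, hI] at hb; linarith
  · intro hgt
    rw [hthr] at hgt
    have hprod : 4 < a * Real.sqrt (2 * l) := by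
      have := mul_lt_mul_of_pos_right hgt hs
      rw [hfour] at this
      exact this
    have hla : 2 * Real.sqrt (2 * l) < l * a := by
      nlinarith [mul_lt_mul_of_pos_left hprod hs, h2, hs]
    have h2a : 2 / Real.sqrt (2 * l) ≤ a := by
      have h24 : (2:ℝ) / Real.sqrt (2 * l) ≤ 4 / Real.sqrt (2 * l) := by
        gcongr
        norm_num
      linarith [hgt]
    have hI := I1D_high ha hl h2a hla.le
    constructor
    · exact ⟨gTwo a l, adm_uTwo hl h2a, by rw [cost_uTwo hl h2a, hI]⟩
    · rintro u g ⟨hadm, hcost⟩ x hx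
      rcases dichotomy ha hl hadm with ⟨-, hb, -⟩ | ⟨-, -, heq⟩
      · rw [hcost, hI] at hb; linarith
      · exact heq (by rw [hcost, hI]) x hx
  · intro heqa
    rw [hthr] at heqa
    have hprod : a * Real.sqrt (2 * l) = 4 := by rw [heqa]; exact hfour
    have hla : l * a = 2 * Real.sqrt (2 * l) := by
      nlinarith [h2, hs, hprod]
    have h2a : 2 / Real.sqrt (2 * l) ≤ a := by
      rw [heqa]
      rw [show (4:ℝ) / Real.sqrt (2*l) = 2 / Real.sqrt (2*l) + 2 / Real.sqrt (2*l) by ring]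
      have : 0 < 2 / Real.sqrt (2 * l) := by positivity
      linarith
    have hI := I1D_high ha hl h2a hla.ge
    refine ⟨⟨fun _ => 0, adm_one a, by rw [cost_one a l ha.le, hI, hla]⟩,
      ⟨gTwo a l, adm_uTwo hl h2a, by rw [cost_uTwo hl h2a, hI]⟩, ?_⟩
    rintro u g ⟨hadm, hcost⟩
    rcases dichotomy ha hl hadm with ⟨-, -, heq⟩ | ⟨-, -, heq⟩
    · exact Or.inl (heq (by rw [hcost, hI, hla]))
    · exact Or.inr (heq (by rw [hcost, hI]))

/-- Structure of the minimizers of the 1D free boundary problem: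
below the threshold `a < 2√(2/λ)` the unique minimizer is `u ≡ 1`, above it
the unique minimizer is `u₂`, and at the threshold exactly these two functions
are minimizers. -/
theorem stmt14 (a l : ℝ) (ha : 0 < a) (hl : 0 < l) :
    (a < 2 * Real.sqrt (2 / l) →
      (∃ g, Min1D a l (fun _ => 1) g) ∧
      ∀ u g, Min1D a l u g → ∀ x ∈ Set.Icc 0 a, u x = 1) ∧
    (2 * Real.sqrt (2 / l) < a →
      (∃ g, Min1D a l (uTwo a l) g) ∧
      ∀ u g, Min1D a l u g → ∀ x ∈ Set.Icc 0 a, u x = uTwo a l x) ∧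
    (a = 2 * Real.sqrt (2 / l) →
      (∃ g, Min1D a l (fun _ => 1) g) ∧ (∃ g, Min1D a l (uTwo a l) g) ∧
      ∀ u g, Min1D a l u g →
        (∀ x ∈ Set.Icc 0 a, u x = 1) ∨ (∀ x ∈ Set.Icc 0 a, u x = uTwo a l x)) :=
  stmt14' a l ha hl
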